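/- Let k be a natural number, let p₁,…,p_k be distinct primes and n = p₁⋯p_k. Then the Wiener index of the k-dprime divisor function graph Γ_k equals 2^{2k} − 3^k. -/

import Mathlib

/-- The `k`-dprime divisor function graph on the positive divisors of `n`:
two distinct divisors `u`, `v` are adjacent iff `u ∣ v` or `v ∣ u`. -/
def divisorGraph (n : ℕ) : SimpleGraph {d : ℕ // d ∈ n.divisors} where
  Adj u v := u ≠ v ∧ ((u : ℕ) ∣ (v : ℕ) ∨ (v : ℕ) ∣ (u : ℕ))
  symm := ⟨fun _ _ ⟨h, hd⟩ => ⟨h.symm, hd.symm⟩⟩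
  loopless := ⟨fun _ ⟨h, _⟩ => h rfl⟩

instance (n : ℕ) : DecidableRel (divisorGraph n).Adj :=
  fun u v => show Decidable (u ≠ v ∧ ((u : ℕ) ∣ (v : ℕ) ∨ (v : ℕ) ∣ (u : ℕ))) from instDecidableAnd

lemma two_mul_sum_sym2 {α : Type*} [DecidableEq α] (s : Finset α) (f : Sym2 α → ℕ) :
    (∑ x ∈ s ×ˢ s, f s(x.1, x.2)) + ∑ a ∈ s, f s(a, a) = 2 * ∑ e ∈ s.sym2, f e := by
  induction s using Finset.induction_on with
  | empty => simp
  | @insert a s ha ih =>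
    rw [Finset.sum_product] at ih ⊢
    rw [Finset.sym2_insert, Finset.sum_union (by
        rw [Finset.disjoint_left]
        rintro e he hes
        obtain ⟨b, _, rfl⟩ := Finset.mem_image.mp he
        exact ha ((Finset.mem_sym2_iff.mp hes) a (by simp)) ),
      Finset.sum_image (by
        intro x _ y _ hxy
        exact (Sym2.congr_right).mp hxy)]
    rw [Finset.sum_insert ha, Finset.sum_insert ha, Finset.sum_insert ha]
    have hswap : ∑ x ∈ s, f s(x, a) = ∑ x ∈ s, f s(a, x) := by
      refine Finset.sum_congr rfl fun x _ => ?_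
      rw [Sym2.eq_swap]
    simp only [Finset.sum_insert ha, Finset.sum_add_distrib, hswap]
    dsimp only at ih
    omega

lemma sum_pow_card {α : Type*} [DecidableEq α] (s : Finset α) :
    ∑ t ∈ s.powerset, 2 ^ t.card = 3 ^ s.card := by
  induction s using Finset.induction_on with
  | empty => simp
  | @insert a s ha ih =>
    rw [Finset.powerset_insert, Finset.sum_union (by
        rw [Finset.disjoint_left]
        rintro t ht hti
        obtain ⟨r, hr, rfl⟩ := Finset.mem_image.mp hti
        exact ha (Finset.mem_powerset.mp ht (Finset.mem_insert_self a r)) ),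
      Finset.sum_image (by
        intro x hx y hy hxy
        have hax : a ∉ x := fun h => ha (Finset.mem_powerset.mp hx h)
        have hay : a ∉ y := fun h => ha (Finset.mem_powerset.mp hy h)
        rw [← Finset.erase_insert hax, ← Finset.erase_insert hay, hxy])]
    have : ∀ x ∈ s.powerset, 2 ^ (insert a x).card = 2 * 2 ^ x.card := by
      intro x hx
      rw [Finset.card_insert_of_notMem (fun h => ha (Finset.mem_powerset.mp hx h)), pow_succ]
      ring
    rw [Finset.sum_congr rfl this, Finset.card_insert_of_notMem ha, pow_succ, ← Finset.mul_sum, ih]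
    ring

section
variable {k : ℕ} {p : Fin k → ℕ}

lemma aux_mem (hp : ∀ i, (p i).Prime) (hinj : Function.Injective p)
    (S : Finset (Fin k)) (i : Fin k) : p i ∣ ∏ j ∈ S, p j ↔ i ∈ S := by
  constructor
  · intro h
    obtain ⟨j, hj, hij⟩ := ((hp i).prime.dvd_finset_prod_iff _).mp h
    rwa [hinj ((Nat.prime_dvd_prime_iff_eq (hp i) (hp j)).mp hij)]
  · intro h
    exact Finset.dvd_prod_of_mem _ h

lemma aux_dvd (hp : ∀ i, (p i).Prime) (hinj : Function.Injective p)
    (S T : Finset (Fin k)) : (∏ i ∈ S, p i) ∣ ∏ i ∈ T, p i ↔ S ⊆ T := by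
  constructor
  · intro h i hi
    exact (aux_mem hp hinj T i).mp (dvd_trans ((aux_mem hp hinj S i).mpr hi) h)
  · intro h
    exact Finset.prod_dvd_prod_of_subset _ _ _ h

lemma aux_surj (hp : ∀ i, (p i).Prime) (s : Finset (Fin k)) :
    ∀ d, d ∣ ∏ i ∈ s, p i → ∃ t ⊆ s, ∏ i ∈ t, p i = d := by
  induction s using Finset.induction_on with
  | empty =>
    intro d hd
    simp only [Finset.prod_empty, Nat.dvd_one] at hd
    exact ⟨∅, Finset.Subset.refl _, by simp [hd]⟩
  | @insert a s ha ih =>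
    intro d hd
    rw [Finset.prod_insert ha] at hd
    by_cases hpa : p a ∣ d
    · obtain ⟨d', rfl⟩ := hpa
      have hd' : d' ∣ ∏ i ∈ s, p i :=
        (Nat.mul_dvd_mul_iff_left (hp a).pos).mp hd
      obtain ⟨t, hts, htd⟩ := ih d' hd'
      refine ⟨insert a t, Finset.insert_subset_insert a hts, ?_⟩
      rw [Finset.prod_insert (fun h => ha (hts h)), htd]
    · have hcop : Nat.Coprime (p a) d := ((hp a).coprime_iff_not_dvd).mpr hpa
      have hdm : d ∣ ∏ i ∈ s, p i := (Nat.Coprime.dvd_of_dvd_mul_left hcop.symm) hd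
      obtain ⟨t, hts, htd⟩ := ih d hdm
      exact ⟨t, hts.trans (Finset.subset_insert _ _), htd⟩

lemma prod_ne_zero (hp : ∀ i, (p i).Prime) : (∏ i, p i) ≠ 0 :=
  Finset.prod_ne_zero_iff.mpr fun i _ => (hp i).pos.ne'

/-- The bijection between divisors of `∏ i, p i` and subsets of `Fin k`. -/
def eDiv (hp : ∀ i, (p i).Prime) (hinj : Function.Injective p) :
    {d : ℕ // d ∈ (∏ i, p i).divisors} ≃ Finset (Fin k) where
  toFun d := Finset.univ.filter fun i => p i ∣ (d : ℕ)
  invFun S := ⟨∏ i ∈ S, p i, Nat.mem_divisors.mpr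
    ⟨Finset.prod_dvd_prod_of_subset _ _ _ (Finset.subset_univ S), prod_ne_zero hp⟩⟩
  left_inv := by
    rintro ⟨d, hd⟩
    obtain ⟨t, -, rfl⟩ := aux_surj hp Finset.univ d (Nat.mem_divisors.mp hd).1
    have : (Finset.univ.filter fun i => p i ∣ ∏ j ∈ t, p j) = t := by
      ext i
      simp [aux_mem hp hinj]
    simp only [this]
  right_inv := by
    intro S
    ext i
    simp [aux_mem hp hinj]

lemma eDiv_spec (hp : ∀ i, (p i).Prime) (hinj : Function.Injective p)
    (u : {d : ℕ // d ∈ (∏ i, p i).divisors}) :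
    ∏ i ∈ eDiv hp hinj u, p i = (u : ℕ) :=
  congrArg Subtype.val ((eDiv hp hinj).left_inv u)

lemma eDiv_dvd (hp : ∀ i, (p i).Prime) (hinj : Function.Injective p)
    (u v : {d : ℕ // d ∈ (∏ i, p i).divisors}) :
    (u : ℕ) ∣ (v : ℕ) ↔ eDiv hp hinj u ⊆ eDiv hp hinj v := by
  rw [← eDiv_spec hp hinj u, ← eDiv_spec hp hinj v, aux_dvd hp hinj]

end

lemma sum_swap_pairs {α : Type*} [Fintype α] (f : α × α → ℕ) :
    ∑ x : α × α, f x = ∑ x : α × α, f (x.2, x.1) :=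
  Fintype.sum_equiv (Equiv.prodComm α α) _ _ (fun _ => rfl)

lemma dist_add_ite (n : ℕ) (hn : n ≠ 0) (u v : {d : ℕ // d ∈ n.divisors}) :
    (divisorGraph n).dist u v + (if (u : ℕ) ∣ (v : ℕ) then 1 else 0)
      + (if (v : ℕ) ∣ (u : ℕ) then 1 else 0) = 2 := by
  have hone : (1 : ℕ) ∈ n.divisors := Nat.one_mem_divisors.mpr hn
  by_cases h1 : (u : ℕ) ∣ (v : ℕ)
  · by_cases h2 : (v : ℕ) ∣ (u : ℕ)
    · have : u = v := Subtype.ext (Nat.dvd_antisymm h1 h2)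
      subst this
      simp [SimpleGraph.dist_self]
    · have hne : u ≠ v := fun h => h2 (h ▸ dvd_refl _)
      have : (divisorGraph n).dist u v = 1 :=
        SimpleGraph.dist_eq_one_iff_adj.mpr ⟨hne, Or.inl h1⟩
      simp [this, h1, h2]
  · by_cases h2 : (v : ℕ) ∣ (u : ℕ)
    · have hne : u ≠ v := fun h => h1 (h ▸ dvd_refl _)
      have : (divisorGraph n).dist u v = 1 :=
        SimpleGraph.dist_eq_one_iff_adj.mpr ⟨hne, Or.inr h2⟩
      simp [this, h1, h2]
    · have hne : u ≠ v := fun h => h1 (h ▸ dvd_refl _)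
      have hu1 : u ≠ ⟨1, hone⟩ := fun h => h1 (by rw [h]; exact one_dvd _)
      have hv1 : v ≠ ⟨1, hone⟩ := fun h => h2 (by rw [h]; exact one_dvd _)
      have a1 : (divisorGraph n).Adj u ⟨1, hone⟩ := ⟨hu1, Or.inr (one_dvd _)⟩
      have a2 : (divisorGraph n).Adj (⟨1, hone⟩ : {d : ℕ // d ∈ n.divisors}) v :=
        ⟨fun h => hv1 h.symm, Or.inl (one_dvd _)⟩
      have hle : (divisorGraph n).dist u v ≤ 2 := by
        have := SimpleGraph.dist_le (a1.toWalk.append a2.toWalk)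
        simpa [SimpleGraph.Walk.length_append] using this
      have hpos : 0 < (divisorGraph n).dist u v :=
        SimpleGraph.Reachable.pos_dist_of_ne ⟨a1.toWalk.append a2.toWalk⟩ hne
      have hne1 : (divisorGraph n).dist u v ≠ 1 := by
        intro h
        exact h1 ((SimpleGraph.dist_eq_one_iff_adj.mp h).2.elim id fun hh => absurd hh h2)
      have : (divisorGraph n).dist u v = 2 := by omega
      simp [this, h1, h2]

/-- The Wiener index: the sum of graph distances over all unordered pairs of vertices
(pairs `{u,u}` contribute distance `0`). -/
theorem stmt_7 (k : ℕ) (p : Fin k → ℕ) (hp : ∀ i, (p i).Prime)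
    (hinj : Function.Injective p) (n : ℕ) (hn : n = ∏ i, p i) :
    ∑ e ∈ (Finset.univ : Finset {d : ℕ // d ∈ n.divisors}).sym2,
      Sym2.lift ⟨fun u v => (divisorGraph n).dist u v,
        fun _ _ => SimpleGraph.dist_comm⟩ e = 2 ^ (2 * k) - 3 ^ k := by
  subst hn
  have hn0 : (∏ i, p i) ≠ 0 := prod_ne_zero hp
  have key := two_mul_sum_sym2
      (Finset.univ : Finset {d : ℕ // d ∈ (∏ i, p i).divisors})
      (Sym2.lift ⟨fun u v => (divisorGraph (∏ i, p i)).dist u v,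
        fun _ _ => SimpleGraph.dist_comm⟩)
  simp only [Sym2.lift_mk, SimpleGraph.dist_self, Finset.sum_const_zero, add_zero] at key
  have hpt : ∀ x : {d : ℕ // d ∈ (∏ i, p i).divisors} × {d : ℕ // d ∈ (∏ i, p i).divisors},
      (divisorGraph (∏ i, p i)).dist x.1 x.2
      + ((if (x.1 : ℕ) ∣ (x.2 : ℕ) then 1 else 0) + (if (x.2 : ℕ) ∣ (x.1 : ℕ) then 1 else 0))
      = 2 := by
    intro x
    have := dist_add_ite (∏ i, p i) hn0 x.1 x.2
    omega
  have hsum : (∑ x : {d : ℕ // d ∈ (∏ i, p i).divisors} × {d : ℕ // d ∈ (∏ i, p i).divisors},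
        (divisorGraph (∏ i, p i)).dist x.1 x.2)
      + ((∑ x : {d : ℕ // d ∈ (∏ i, p i).divisors} × {d : ℕ // d ∈ (∏ i, p i).divisors},
          (if (x.1 : ℕ) ∣ (x.2 : ℕ) then 1 else 0))
        + (∑ x : {d : ℕ // d ∈ (∏ i, p i).divisors} × {d : ℕ // d ∈ (∏ i, p i).divisors},
          (if (x.2 : ℕ) ∣ (x.1 : ℕ) then 1 else 0)))
      = ∑ _x : {d : ℕ // d ∈ (∏ i, p i).divisors} × {d : ℕ // d ∈ (∏ i, p i).divisors}, 2 := by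
    rw [← Finset.sum_add_distrib, ← Finset.sum_add_distrib]
    exact Finset.sum_congr rfl fun x _ => hpt x
  have hfin : ∑ y : Finset (Fin k) × Finset (Fin k), (if y.1 ⊆ y.2 then (1 : ℕ) else 0)
      = 3 ^ k := by
    rw [Fintype.sum_prod_type, Finset.sum_comm]
    have h1 : ∀ T : Finset (Fin k),
        ∑ S : Finset (Fin k), (if S ⊆ T then (1 : ℕ) else 0) = 2 ^ T.card := by
      intro T
      rw [← Finset.sum_filter]
      have : (Finset.univ.filter fun S => S ⊆ T) = T.powerset := by
        ext S; simp
      rw [this, Finset.sum_const, Finset.card_powerset, smul_eq_mul, mul_one]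
    rw [Finset.sum_congr rfl fun T _ => h1 T]
    have h2 : ∑ T : Finset (Fin k), 2 ^ T.card
        = ∑ T ∈ (Finset.univ : Finset (Fin k)).powerset, 2 ^ T.card := by
      rw [Finset.powerset_univ]
    rw [h2, sum_pow_card, Finset.card_univ, Fintype.card_fin]
  have hc1 : ∑ x : {d : ℕ // d ∈ (∏ i, p i).divisors} × {d : ℕ // d ∈ (∏ i, p i).divisors},
      (if (x.1 : ℕ) ∣ (x.2 : ℕ) then (1 : ℕ) else 0) = 3 ^ k := by
    rw [Fintype.sum_equiv ((eDiv hp hinj).prodCongr (eDiv hp hinj)) _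
      (fun y : Finset (Fin k) × Finset (Fin k) => if y.1 ⊆ y.2 then (1 : ℕ) else 0)
      (fun x => by
        simp only [Equiv.prodCongr_apply, Prod.map]
        by_cases h : (x.1 : ℕ) ∣ (x.2 : ℕ)
        · rw [if_pos h, if_pos ((eDiv_dvd hp hinj x.1 x.2).mp h)]
        · rw [if_neg h, if_neg (fun hh => h ((eDiv_dvd hp hinj x.1 x.2).mpr hh))])]
    exact hfin
  have hc2 : ∑ x : {d : ℕ // d ∈ (∏ i, p i).divisors} × {d : ℕ // d ∈ (∏ i, p i).divisors},
      (if (x.2 : ℕ) ∣ (x.1 : ℕ) then (1 : ℕ) else 0) = 3 ^ k := by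
    rw [sum_swap_pairs (fun x : {d : ℕ // d ∈ (∏ i, p i).divisors} ×
      {d : ℕ // d ∈ (∏ i, p i).divisors} => if (x.2 : ℕ) ∣ (x.1 : ℕ) then (1 : ℕ) else 0)]
    exact hc1
  have hcard : (Finset.univ : Finset {d : ℕ // d ∈ (∏ i, p i).divisors}).card = 2 ^ k := by
    have h2 : (Finset.univ : Finset (Finset (Fin k))).card = 2 ^ k := by
      rw [Finset.card_univ, Fintype.card_finset, Fintype.card_fin]
    rw [← h2]
    exact Finset.card_bij (fun a _ => eDiv hp hinj a) (fun a _ => Finset.mem_univ _)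
      (fun a _ b _ h => (eDiv hp hinj).injective h)
      (fun b _ => ⟨(eDiv hp hinj).symm b, Finset.mem_univ _, (eDiv hp hinj).apply_symm_apply b⟩)
  have hconst : ∑ _x : {d : ℕ // d ∈ (∏ i, p i).divisors} × {d : ℕ // d ∈ (∏ i, p i).divisors},
      (2 : ℕ) = 2 ^ (2 * k) * 2 := by
    rw [Finset.sum_const, smul_eq_mul, ← Finset.univ_product_univ, Finset.card_product, hcard,
      two_mul, pow_add]
  rw [Finset.univ_product_univ] at key
  rw [hc1, hc2, hconst, key] at hsum
  have h34 : 3 ^ k ≤ 2 ^ (2 * k) := by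
    calc 3 ^ k ≤ 4 ^ k := Nat.pow_le_pow_left (by norm_num) k
    _ = 2 ^ (2 * k) := by rw [pow_mul]; norm_num
  generalize h3 : (3:ℕ) ^ k = A at hsum h34 ⊢
  generalize h2 : (2:ℕ) ^ (2 * k) = B at hsum h34 ⊢
  omega
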